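/- For r = 2m+2 ≥ 4 even, the length vector ℓ = (1,1,1,2,...,2) ∈ ℝ^r (three entries 1 followed by 2m−1 entries 2) is generic and satisfies μ(ℓ) = m. -/
import Mathlib

open Finset

/-- `J` is `ℓ`-long if the sum of `ℓ` over `J` exceeds the sum over its complement. -/
def IsLong {r : ℕ} (ℓ : Fin r → ℝ) (J : Finset (Fin r)) : Prop :=
  ∑ j ∈ Jᶜ, ℓ j < ∑ j ∈ J, ℓ j

/-- `ℓ` is generic if no subset sum equals the complementary sum. -/
def IsGeneric {r : ℕ} (ℓ : Fin r → ℝ) : Prop :=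
  ∀ J : Finset (Fin r), ∑ j ∈ J, ℓ j ≠ ∑ j ∈ Jᶜ, ℓ j

open scoped Classical in
/-- `σ_ℓ(J)`: the number of `j ∈ J` such that `J \ {j}` is `ℓ`-short. -/
noncomputable def sigmaL {r : ℕ} (ℓ : Fin r → ℝ) (J : Finset (Fin r)) : ℕ :=
  (J.filter (fun j => ¬ IsLong ℓ (J.erase j))).card

/-- `μ(ℓ) = min { σ_ℓ(J) : J ℓ-long, σ_ℓ(J) > 0 }`. -/
noncomputable def muL {r : ℕ} (ℓ : Fin r → ℝ) : ℕ :=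
  sInf {n : ℕ | 0 < n ∧ ∃ J : Finset (Fin r), IsLong ℓ J ∧ sigmaL ℓ J = n}

namespace OneTwoAux

def L (m : ℕ) : Fin (2*m+2) → ℝ := fun j => if (j:ℕ) < 3 then 1 else 2

def A (m : ℕ) (J : Finset (Fin (2*m+2))) : ℕ :=
  (J.filter (fun j : Fin (2*m+2) => (j:ℕ) < 3)).card

def B (m : ℕ) (J : Finset (Fin (2*m+2))) : ℕ :=
  (J.filter (fun j : Fin (2*m+2) => ¬ (j:ℕ) < 3)).card

lemma sumJ (m : ℕ) (J : Finset (Fin (2*m+2))) :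
    ∑ j ∈ J, L m j = ((A m J + 2 * B m J : ℕ) : ℝ) := by
  rw [← Finset.sum_filter_add_sum_filter_not J (fun j : Fin (2*m+2) => (j:ℕ) < 3)]
  have h1 : ∑ j ∈ J.filter (fun j : Fin (2*m+2) => (j:ℕ) < 3), L m j = (A m J : ℝ) := by
    rw [Finset.sum_congr rfl (fun j hj => ?_), Finset.sum_const, nsmul_eq_mul, mul_one]
    · rfl
    · simp only [Finset.mem_filter] at hj
      simp [L, hj.2]
  have h2 : ∑ j ∈ J.filter (fun j : Fin (2*m+2) => ¬ (j:ℕ) < 3), L m j = 2 * (B m J : ℝ) := by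
    rw [Finset.sum_congr rfl (fun j hj => ?_), Finset.sum_const, nsmul_eq_mul]
    · rw [mul_comm]; rfl
    · simp only [Finset.mem_filter] at hj
      simp [L, hj.2]
  rw [h1, h2]
  push_cast
  ring

lemma card_filter_fin (n : ℕ) (p : ℕ → Prop) [DecidablePred p] :
    (Finset.univ.filter (fun j : Fin n => p j.val)).card = ((Finset.range n).filter p).card := by
  rw [Finset.card_filter, Finset.card_filter,
    Fin.sum_univ_eq_sum_range (fun i => if p i then 1 else 0)]

lemma AB_card (m : ℕ) (J : Finset (Fin (2*m+2))) : A m J + B m J = J.card :=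
  Finset.card_filter_add_card_filter_not _

lemma A_univ (m : ℕ) (hm : 1 ≤ m) : A m (univ : Finset (Fin (2*m+2))) = 3 := by
  have h : ((univ : Finset (Fin (2*m+2))).filter (fun j : Fin (2*m+2) => (j:ℕ) < 3)).card
      = ((Finset.range (2*m+2)).filter (fun i => i < 3)).card := card_filter_fin (2*m+2) (fun i => i < 3)
  rw [A, h]
  have h2 : (Finset.range (2*m+2)).filter (fun i => i < 3) = Finset.range 3 := by
    ext x; simp only [Finset.mem_filter, Finset.mem_range]; omega
  rw [h2, Finset.card_range]

lemma A_le (m : ℕ) (hm : 1 ≤ m) (J : Finset (Fin (2*m+2))) : A m J ≤ 3 := by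
  rw [← A_univ m hm]
  exact Finset.card_le_card (Finset.filter_subset_filter _ (Finset.subset_univ J))

lemma total (m : ℕ) (hm : 1 ≤ m) : ∑ j, L m j = ((4*m+1 : ℕ) : ℝ) := by
  rw [sumJ]
  have h1 := A_univ m hm
  have h2 := AB_card m (univ : Finset (Fin (2*m+2)))
  rw [Finset.card_univ, Fintype.card_fin] at h2
  congr 1
  omega

lemma sum_compl (m : ℕ) (hm : 1 ≤ m) (J : Finset (Fin (2*m+2))) :
    ∑ j ∈ Jᶜ, L m j = ((4*m+1 : ℕ) : ℝ) - ∑ j ∈ J, L m j := by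
  have := Finset.sum_add_sum_compl J (L m)
  rw [total m hm] at this
  linarith

lemma long_iff (m : ℕ) (hm : 1 ≤ m) (J : Finset (Fin (2*m+2))) :
    IsLong (L m) J ↔ 2*m+1 ≤ A m J + 2 * B m J := by
  rw [IsLong, sum_compl m hm, sumJ]
  constructor
  · intro h
    push_cast at h
    have h' : ((4*m+1 : ℕ) : ℝ) < ((2*(A m J + 2 * B m J) : ℕ) : ℝ) := by push_cast; linarith
    have := Nat.cast_lt (α := ℝ) |>.mp h'
    omega
  · intro h
    have h' : ((4*m+1 : ℕ) : ℝ) < ((2*(A m J + 2 * B m J) : ℕ) : ℝ) :=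
      Nat.cast_lt.mpr (by omega)
    push_cast at h' ⊢
    linarith

lemma erase_short (m : ℕ) (hm : 1 ≤ m) (J : Finset (Fin (2*m+2))) (j : Fin (2*m+2)) (hj : j ∈ J) :
    (¬ IsLong (L m) (J.erase j)) ↔
      A m J + 2 * B m J ≤ (if (j:ℕ) < 3 then 2*m+1 else 2*m+2) := by
  rw [IsLong, not_lt, sum_compl m hm, Finset.sum_erase_eq_sub hj, sumJ]
  by_cases h3 : (j:ℕ) < 3
  · have hLj : L m j = 1 := by simp [L, h3]
    rw [hLj, if_pos h3]
    constructor
    · intro h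
      push_cast at h
      have h' : ((2*(A m J + 2 * B m J) : ℕ) : ℝ) ≤ ((4*m+3 : ℕ) : ℝ) := by push_cast; linarith
      have := Nat.cast_le (α := ℝ) |>.mp h'
      omega
    · intro h
      have h' : ((2*(A m J + 2 * B m J) : ℕ) : ℝ) ≤ ((4*m+3 : ℕ) : ℝ) :=
        Nat.cast_le.mpr (by omega)
      push_cast at h' ⊢
      linarith
  · have hLj : L m j = 2 := by simp [L, h3]
    rw [hLj, if_neg h3]
    constructor
    · intro h
      push_cast at h
      have h' : ((2*(A m J + 2 * B m J) : ℕ) : ℝ) ≤ ((4*m+5 : ℕ) : ℝ) := by push_cast; linarith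
      have := Nat.cast_le (α := ℝ) |>.mp h'
      omega
    · intro h
      have h' : ((2*(A m J + 2 * B m J) : ℕ) : ℝ) ≤ ((4*m+5 : ℕ) : ℝ) :=
        Nat.cast_le.mpr (by omega)
      push_cast at h' ⊢
      linarith

lemma sigma_low (m : ℕ) (hm : 1 ≤ m) (J : Finset (Fin (2*m+2))) (h : A m J + 2 * B m J ≤ 2*m+1) :
    sigmaL (L m) J = J.card := by
  classical
  unfold sigmaL
  have hset : (J.filter (fun j => ¬ IsLong (L m) (J.erase j))) = J := by
    rw [Finset.filter_eq_self]
    intro j hj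
    rw [erase_short m hm J j hj]
    split <;> omega
  rw [hset]

lemma sigma_mid (m : ℕ) (hm : 1 ≤ m) (J : Finset (Fin (2*m+2))) (h : A m J + 2 * B m J = 2*m+2) :
    sigmaL (L m) J = B m J := by
  classical
  unfold sigmaL B
  have hset : (J.filter (fun j => ¬ IsLong (L m) (J.erase j)))
      = J.filter (fun j : Fin (2*m+2) => ¬ (j:ℕ) < 3) := by
    ext j
    simp only [Finset.mem_filter]
    constructor
    · rintro ⟨hj, hns⟩
      refine ⟨hj, ?_⟩
      rw [erase_short m hm J j hj] at hns
      intro h3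
      rw [if_pos h3] at hns
      omega
    · rintro ⟨hj, h3⟩
      refine ⟨hj, ?_⟩
      rw [erase_short m hm J j hj, if_neg h3]
      omega
  rw [hset]

lemma sigma_high (m : ℕ) (hm : 1 ≤ m) (J : Finset (Fin (2*m+2))) (h : 2*m+3 ≤ A m J + 2 * B m J) :
    sigmaL (L m) J = 0 := by
  classical
  unfold sigmaL
  have hset : (J.filter (fun j => ¬ IsLong (L m) (J.erase j))) = ∅ := by
    rw [Finset.filter_eq_empty_iff]
    intro j hj
    rw [not_not]
    by_contra hc
    rw [erase_short m hm J j hj] at hc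
    revert hc
    split <;> omega
  rw [hset, Finset.card_empty]

/-- The witness set: ones at positions 0,1 and twos at positions 3,…,m+2. -/
def W (m : ℕ) : Finset (Fin (2*m+2)) :=
  Finset.univ.filter (fun j : Fin (2*m+2) => ¬ (j:ℕ) = 2 ∧ (j:ℕ) < m+3)

lemma A_W (m : ℕ) (hm : 1 ≤ m) : A m (W m) = 2 := by
  unfold A W
  rw [Finset.filter_filter]
  have h : ((univ : Finset (Fin (2*m+2))).filter
        (fun j : Fin (2*m+2) => (¬ (j:ℕ) = 2 ∧ (j:ℕ) < m+3) ∧ (j:ℕ) < 3)).card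
      = ((Finset.range (2*m+2)).filter (fun i => (¬ i = 2 ∧ i < m+3) ∧ i < 3)).card :=
    card_filter_fin (2*m+2) (fun i => (¬ i = 2 ∧ i < m+3) ∧ i < 3)
  rw [h]
  have h2 : (Finset.range (2*m+2)).filter (fun i => (¬ i = 2 ∧ i < m+3) ∧ i < 3)
      = Finset.range 2 := by
    ext x; simp only [Finset.mem_filter, Finset.mem_range]; omega
  rw [h2, Finset.card_range]

lemma B_W (m : ℕ) (hm : 1 ≤ m) : B m (W m) = m := by
  unfold B W
  rw [Finset.filter_filter]
  have h : ((univ : Finset (Fin (2*m+2))).filter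
        (fun j : Fin (2*m+2) => (¬ (j:ℕ) = 2 ∧ (j:ℕ) < m+3) ∧ ¬ (j:ℕ) < 3)).card
      = ((Finset.range (2*m+2)).filter (fun i => (¬ i = 2 ∧ i < m+3) ∧ ¬ i < 3)).card :=
    card_filter_fin (2*m+2) (fun i => (¬ i = 2 ∧ i < m+3) ∧ ¬ i < 3)
  rw [h]
  have h2 : (Finset.range (2*m+2)).filter (fun i => (¬ i = 2 ∧ i < m+3) ∧ ¬ i < 3)
      = Finset.Ico 3 (m+3) := by
    ext x; simp only [Finset.mem_filter, Finset.mem_range, Finset.mem_Ico]; omega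
  rw [h2, Nat.card_Ico]
  omega

lemma generic (m : ℕ) (hm : 1 ≤ m) : IsGeneric (L m) := by
  intro J h
  rw [sum_compl m hm, sumJ] at h
  have h' : ((2*(A m J + 2 * B m J) : ℕ) : ℝ) = ((4*m+1 : ℕ) : ℝ) := by push_cast at h ⊢; linarith
  have := Nat.cast_inj (R := ℝ) |>.mp h'
  omega

lemma mu (m : ℕ) (hm : 1 ≤ m) : muL (L m) = m := by
  have hlow : ∀ n, (0 < n ∧ ∃ J : Finset (Fin (2*m+2)), IsLong (L m) J ∧ sigmaL (L m) J = n) →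
      m ≤ n := by
    rintro n ⟨hn, J, hlong, hsig⟩
    have hs := (long_iff m hm J).mp hlong
    have hA3 := A_le m hm J
    have hAB := AB_card m J
    rcases lt_or_ge (A m J + 2 * B m J) (2*m+2) with h | h
    · have h1 : A m J + 2 * B m J ≤ 2*m+1 := by omega
      rw [sigma_low m hm J h1] at hsig
      omega
    · rcases eq_or_lt_of_le h with h2 | h2
      · rw [sigma_mid m hm J h2.symm] at hsig
        omega
      · rw [sigma_high m hm J (by omega)] at hsig
        omega
  have hmem : m ∈ {n : ℕ | 0 < n ∧ ∃ J : Finset (Fin (2*m+2)), IsLong (L m) J ∧ sigmaL (L m) J = n} := by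
    refine ⟨hm, W m, ?_, ?_⟩
    · rw [long_iff m hm, A_W m hm, B_W m hm]
      omega
    · rw [sigma_mid m hm (W m) (by rw [A_W m hm, B_W m hm]; ring), B_W m hm]
  rw [muL]
  refine le_antisymm (Nat.sInf_le hmem) ?_
  have hne : {n : ℕ | 0 < n ∧ ∃ J : Finset (Fin (2*m+2)), IsLong (L m) J ∧ sigmaL (L m) J = n}.Nonempty := ⟨m, hmem⟩
  exact hlow _ (Nat.sInf_mem hne)

end OneTwoAux

theorem oneOneOneTwo_generic_mu (m : ℕ) (hm : 1 ≤ m) :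
    IsGeneric (fun j : Fin (2 * m + 2) => if (j : ℕ) < 3 then (1 : ℝ) else 2) ∧
      muL (fun j : Fin (2 * m + 2) => if (j : ℕ) < 3 then (1 : ℝ) else 2) = m := by
  exact ⟨OneTwoAux.generic m hm, OneTwoAux.mu m hm⟩
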